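/- Let p be a probability vector on {1,...,n_k} with CDF F and inverse map F^{-1}, let V_1,...,V_{n_k} in R^{d_k}, mu = sum_j p_j V_j, and Sigma = sum_j p_j (V_j - mu)(V_j - mu)^T. Then the mean squared error of the independent stratified estimator is at most that of the i.i.d. SANTA estimator with the same budget S: E[|| (1/S) sum_{m=0}^{S-1} V_{F^{-1}(T_m)} - mu ||_2^2] <= E[|| (1/S) sum_{s=1}^{S} V_{i_s} - mu ||_2^2] = (1/S) tr(Sigma), where T_m ~ Uniform([m/S,(m+1)/S)) independently and i_1,...,i_S are i.i.d. categorical with probabilities p. -/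

import Mathlib

open MeasureTheory ProbabilityTheory

-- marginalization core
lemma marg_pair {S n : ℕ} (r : Fin S → Fin n → ℝ) (hr1 : ∀ m, ∑ j, r m j = 1)
    (u : Fin n → ℝ) (m1 m2 : Fin S) :
    ∑ c : Fin S → Fin n, (∏ m, r m (c m)) * (u (c m1) * u (c m2))
      = if m1 = m2 then ∑ j, r m1 j * u j ^ 2
        else (∑ j, r m1 j * u j) * (∑ j, r m2 j * u j) := by
  have key : ∀ c : Fin S → Fin n,
      (∏ m, r m (c m)) * (u (c m1) * u (c m2))
        = ∏ m, (r m (c m) * ((if m = m1 then u (c m) else 1) * (if m = m2 then u (c m) else 1))) := by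
    intro c
    rw [Finset.prod_mul_distrib, Finset.prod_mul_distrib]
    congr 1
    rw [Finset.prod_ite_eq' Finset.univ m1 (fun m => u (c m)),
        Finset.prod_ite_eq' Finset.univ m2 (fun m => u (c m))]
    simp
  simp only [key]
  rw [← Fintype.piFinset_univ,
    (Finset.prod_univ_sum (fun _ : Fin S => (Finset.univ : Finset (Fin n)))
      (fun m j => r m j * ((if m = m1 then u j else 1) * if m = m2 then u j else 1))).symm]
  have hfac : ∀ m : Fin S,
      (∑ j, r m j * ((if m = m1 then u j else 1) * (if m = m2 then u j else 1)))
        = if m = m1 then (if m = m2 then ∑ j, r m j * u j ^ 2 else ∑ j, r m j * u j)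
          else (if m = m2 then ∑ j, r m j * u j else 1) := by
    intro m
    by_cases h1 : m = m1 <;> by_cases h2 : m = m2 <;>
      simp [h1, h2, hr1, pow_two, mul_assoc]
  simp only [hfac]
  by_cases h : m1 = m2
  · subst h
    rw [if_pos rfl]
    have : ∀ x : Fin S, (if x = m1 then (if x = m1 then ∑ j, r x j * u j ^ 2 else ∑ j, r x j * u j)
        else (if x = m1 then ∑ j, r x j * u j else 1)) = (if x = m1 then ∑ j, r x j * u j ^ 2 else 1) := by
      intro x; by_cases hx : x = m1 <;> simp [hx]
    simp only [this]
    rw [Finset.prod_ite_eq' Finset.univ m1 (fun x => ∑ j, r x j * u j ^ 2)]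
    simp
  · rw [if_neg h]
    have : (∏ m : Fin S, if m = m1 then (if m = m2 then ∑ j, r m j * u j ^ 2 else ∑ j, r m j * u j)
          else (if m = m2 then ∑ j, r m j * u j else 1))
        = ∏ m ∈ ({m1, m2} : Finset (Fin S)), (if m = m1 then (if m = m2 then ∑ j, r m j * u j ^ 2 else ∑ j, r m j * u j)
          else (if m = m2 then ∑ j, r m j * u j else 1)) := by
      refine (Finset.prod_subset (Finset.subset_univ _) ?_).symm
      intro x _ hx
      simp only [Finset.mem_insert, Finset.mem_singleton, not_or] at hx
      simp [hx.1, hx.2]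
    rw [this, Finset.prod_pair h]
    simp [h, Ne.symm h]

lemma core_sum {S n : ℕ} (r : Fin S → Fin n → ℝ) (hr1 : ∀ m, ∑ j, r m j = 1)
    (u : Fin n → ℝ) :
    ∑ c : Fin S → Fin n, (∏ m, r m (c m)) * (∑ m, u (c m)) ^ 2
      = (∑ m, ∑ j, r m j * u j) ^ 2 + ∑ m, (∑ j, r m j * u j ^ 2)
        - ∑ m, (∑ j, r m j * u j) ^ 2 := by
  have expand : ∀ c : Fin S → Fin n, (∑ m, u (c m)) ^ 2
      = ∑ m1, ∑ m2, u (c m1) * u (c m2) := by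
    intro c; rw [pow_two, Finset.sum_mul_sum]
  calc ∑ c : Fin S → Fin n, (∏ m, r m (c m)) * (∑ m, u (c m)) ^ 2
      = ∑ m1, ∑ m2, ∑ c : Fin S → Fin n, (∏ m, r m (c m)) * (u (c m1) * u (c m2)) := by
        simp only [expand, Finset.mul_sum]
        rw [Finset.sum_comm]
        congr 1; ext m1
        rw [Finset.sum_comm]
    _ = ∑ m1, ∑ m2, (if m1 = m2 then ∑ j, r m1 j * u j ^ 2
          else (∑ j, r m1 j * u j) * (∑ j, r m2 j * u j)) := by
        simp only [marg_pair r hr1 u]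
    _ = ∑ m1, ∑ m2, ((∑ j, r m1 j * u j) * (∑ j, r m2 j * u j)
          + (if m1 = m2 then (∑ j, r m1 j * u j ^ 2) - (∑ j, r m1 j * u j) ^ 2 else 0)) := by
        congr 1; ext m1; congr 1; ext m2
        by_cases h : m1 = m2 <;> simp [h, pow_two]
    _ = (∑ m, ∑ j, r m j * u j) ^ 2 + ∑ m, (∑ j, r m j * u j ^ 2)
        - ∑ m, (∑ j, r m j * u j) ^ 2 := by
        simp only [Finset.sum_add_distrib, Finset.sum_ite_eq, Finset.mem_univ, if_true]
        rw [← Finset.sum_mul_sum, ← pow_two]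
        rw [Finset.sum_sub_distrib]
        ring

lemma expect_fin {Ω : Type*} [MeasurableSpace Ω] (P : Measure Ω) [IsProbabilityMeasure P]
    {S n : ℕ} (J : Fin S → Ω → Fin n) (hJ : ∀ m, Measurable (J m))
    (hind : iIndepFun J P) (g : (Fin S → Fin n) → ℝ) :
    ∫ ω, g (fun m => J m ω) ∂P
      = ∑ c : Fin S → Fin n, (∏ m, (P {ω | J m ω = c m}).toReal) * g c := by
  set Jv : Ω → (Fin S → Fin n) := fun ω m => J m ω with hJv
  have hJvm : Measurable Jv := measurable_pi_lambda _ hJ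
  have hmap : ∫ ω, g (Jv ω) ∂P = ∫ x, g x ∂(P.map Jv) :=
    (integral_map hJvm.aemeasurable
      (measurable_of_countable g).aestronglyMeasurable).symm
  haveI : IsProbabilityMeasure (P.map Jv) := Measure.isProbabilityMeasure_map hJvm.aemeasurable
  rw [hmap, integral_fintype Integrable.of_finite]
  refine Finset.sum_congr rfl fun c _ => ?_
  rw [Measure.real, Measure.map_apply hJvm (measurableSet_singleton c)]
  have hpre : Jv ⁻¹' {c} = ⋂ m, J m ⁻¹' {c m} := by
    ext ω; simp [hJv, funext_iff, Set.mem_iInter]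
  have hindc := hind.measure_inter_preimage_eq_mul Finset.univ
    (sets := fun m => {c m}) (fun m _ => measurableSet_singleton _)
  rw [hpre, show (⋂ m, J m ⁻¹' {c m}) = ⋂ i ∈ Finset.univ, J i ⁻¹' {c i} by simp, hindc,
    ENNReal.toReal_prod, smul_eq_mul]
  rfl

lemma sum_fiber {Ω : Type*} [MeasurableSpace Ω] (P : Measure Ω) [IsProbabilityMeasure P]
    {n : ℕ} (J : Ω → Fin n) (hJ : Measurable J) :
    ∑ j, (P {ω | J ω = j}).toReal = 1 := by
  have : ∀ j : Fin n, {ω | J ω = j} = J ⁻¹' {j} := fun j => rfl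
  simp only [this]
  rw [← ENNReal.toReal_sum (fun j _ => measure_ne_top P _),
    sum_measure_preimage_singleton _ (fun j _ => hJ (measurableSet_singleton j))]
  have : J ⁻¹' ↑(Finset.univ : Finset (Fin n)) = Set.univ := by simp
  rw [this, measure_univ, ENNReal.toReal_one]

/-- **MSE ordering: stratified vs. i.i.d. SANTA.** With `Finv` the inverse CDF of the
probability vector `p`, `μ = ∑ j, p j • V j`, and `Σ = ∑ j, p j (V j - μ)(V j - μ)ᵀ`:
if `T m ~ Uniform [m/S, (m+1)/S)` independently (stratified) and `i 1, …, i S` are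
i.i.d. categorical with probabilities `p` (SANTA), then
`E[‖(1/S) ∑ m, V (Finv (T m)) - μ‖²] ≤ E[‖(1/S) ∑ s, V (i s) - μ‖²] = (1/S) tr Σ`. -/
theorem s2anta_strat_mse_le_santa_mse
    {Ω : Type*} [MeasurableSpace Ω] (P : Measure Ω) [IsProbabilityMeasure P]
    {n d S : ℕ} (hS : 0 < S)
    (V : Fin n → EuclideanSpace ℝ (Fin d))
    (p : Fin n → ℝ) (hp : ∀ j, 0 ≤ p j) (hp1 : ∑ j, p j = 1)
    (Finv : ℝ → Fin n) (hFinvMeas : Measurable Finv)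
    (hFinv : ∀ t : ℝ, 0 ≤ t → t < 1 → ∀ j : Fin n,
      Finv t = j ↔
        (∑ i ∈ Finset.univ.filter (fun i : Fin n => (i : ℕ) < (j : ℕ)), p i) ≤ t ∧
          t < ∑ i ∈ Finset.univ.filter (fun i : Fin n => (i : ℕ) < (j : ℕ) + 1), p i)
    (T : Fin S → Ω → ℝ) (hTmeas : ∀ m, Measurable (T m))
    (hTindep : iIndepFun T P)
    (hTunif : ∀ m : Fin S,
      pdf.IsUniform (T m) (Set.Ico (((m : ℕ) : ℝ) / S) ((((m : ℕ) : ℝ) + 1) / S)) P)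
    (i : Fin S → Ω → Fin n)
    (himeas : ∀ s, Measurable (i s))
    (hiindep : iIndepFun i P)
    (hilaw : ∀ s j, (P {ω | i s ω = j}).toReal = p j)
    (mu : EuclideanSpace ℝ (Fin d)) (hmu : mu = ∑ j, p j • V j)
    (Sigma : Matrix (Fin d) (Fin d) ℝ)
    (hSigma : ∀ a b, Sigma a b = ∑ j, p j * ((V j a - mu a) * (V j b - mu b))) :
    (∫ ω, ‖((S : ℝ)⁻¹ • ∑ m, V (Finv (T m ω))) - mu‖ ^ 2 ∂P)
        ≤ (∫ ω, ‖((S : ℝ)⁻¹ • ∑ s, V (i s ω)) - mu‖ ^ 2 ∂P) ∧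
      (∫ ω, ‖((S : ℝ)⁻¹ • ∑ s, V (i s ω)) - mu‖ ^ 2 ∂P)
        = (S : ℝ)⁻¹ * Matrix.trace Sigma := by
  have hSpos : (0:ℝ) < S := by exact_mod_cast hS
  have hSne : (S:ℝ) ≠ 0 := ne_of_gt hSpos
  -- stratified index variables
  set J : Fin S → Ω → Fin n := fun m ω => Finv (T m ω) with hJdef
  have hJmeas : ∀ m, Measurable (J m) := fun m => hFinvMeas.comp (hTmeas m)
  have hJind : iIndepFun J P :=
    hTindep.comp (fun _ => Finv) (fun _ => hFinvMeas)
  set r : Fin S → Fin n → ℝ := fun m j => (P {ω | J m ω = j}).toReal with hrdef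
  have hr1 : ∀ m, ∑ j, r m j = 1 := fun m => sum_fiber P (J m) (hJmeas m)
  -- the strata
  set I : Fin S → Set ℝ := fun m => Set.Ico (((m:ℕ):ℝ) / S) ((((m:ℕ):ℝ) + 1) / S) with hIdef
  have hIvol : ∀ m, volume (I m) = ENNReal.ofReal (1/S) := by
    intro m
    rw [hIdef]
    rw [Real.volume_Ico]
    congr 1
    field_simp
    ring
  have hvol0 : ENNReal.ofReal (1/S) ≠ 0 := by
    have h01 : (0:ℝ) < 1/S := by positivity
    simp [ENNReal.ofReal_eq_zero, not_le, h01, hS.ne']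
  -- fibers of Finv
  set A : Fin n → Set ℝ := fun j => Finv ⁻¹' {j} with hAdef
  have hAmeas : ∀ j, MeasurableSet (A j) := fun j => hFinvMeas (measurableSet_singleton j)
  -- law of each stratified variable
  have hrm : ∀ m j, r m j = S * (volume (I m ∩ A j)).toReal := by
    intro m j
    have : {ω | J m ω = j} = T m ⁻¹' (A j) := rfl
    rw [hrdef]
    simp only [this]
    rw [pdf.IsUniform.measure_preimage (by rw [hIvol m]; exact hvol0)
      (by rw [hIvol m]; exact ENNReal.ofReal_ne_top) (hTunif m) (hAmeas j)]
    rw [ENNReal.toReal_div, hIvol m, ENNReal.toReal_ofReal (by positivity)]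
    field_simp
    ring
  -- partial sums
  set F0 : Fin n → ℝ := fun j => ∑ i ∈ Finset.univ.filter (fun i : Fin n => (i : ℕ) < (j : ℕ)), p i with hF0
  set F1 : Fin n → ℝ := fun j => ∑ i ∈ Finset.univ.filter (fun i : Fin n => (i : ℕ) < (j : ℕ) + 1), p i with hF1
  have hF0nonneg : ∀ j, 0 ≤ F0 j := fun j => Finset.sum_nonneg (fun i _ => hp i)
  have hF1le : ∀ j, F1 j ≤ 1 := by
    intro j
    rw [← hp1]
    exact Finset.sum_le_sum_of_subset_of_nonneg (Finset.filter_subset _ _) (fun i _ _ => hp i)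
  have hF10 : ∀ j, F1 j = F0 j + p j := by
    intro j
    simp only [hF1, hF0]
    have : Finset.univ.filter (fun i : Fin n => (i : ℕ) < (j : ℕ) + 1)
        = insert j (Finset.univ.filter (fun i : Fin n => (i : ℕ) < (j : ℕ))) := by
      ext x
      simp only [Finset.mem_filter, Finset.mem_univ, true_and, Finset.mem_insert, Fin.ext_iff]
      omega
    rw [this, Finset.sum_insert (by simp)]
    ring
  -- intersection with [0,1)
  have hIcoA : ∀ j, Set.Ico (0:ℝ) 1 ∩ A j = Set.Ico (F0 j) (F1 j) := by
    intro j
    ext t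
    simp only [Set.mem_inter_iff, Set.mem_Ico, hAdef, Set.mem_preimage, Set.mem_singleton_iff]
    constructor
    · rintro ⟨⟨h0, h1⟩, hFt⟩
      exact (hFinv t h0 h1 j).1 hFt
    · rintro ⟨ha, hb⟩
      have h0 : 0 ≤ t := le_trans (hF0nonneg j) ha
      have h1 : t < 1 := lt_of_lt_of_le hb (hF1le j)
      exact ⟨⟨h0, h1⟩, (hFinv t h0 h1 j).2 ⟨ha, hb⟩⟩
  -- strata disjoint
  have hIdisj : ∀ m1 m2 : Fin S, m1 ≠ m2 → Disjoint (I m1) (I m2) := by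
    intro m1 m2 hne
    rw [hIdef, Set.Ico_disjoint_Ico]
    have hne' : (m1:ℕ) ≠ (m2:ℕ) := fun h => hne (Fin.ext h)
    rcases lt_or_gt_of_ne hne' with h | h
    · refine le_trans (min_le_left _ _) (le_trans ?_ (le_max_right _ _))
      have : ((m1:ℕ):ℝ) + 1 ≤ ((m2:ℕ):ℝ) := by exact_mod_cast h
      gcongr
    · refine le_trans (min_le_right _ _) (le_trans ?_ (le_max_left _ _))
      have : ((m2:ℕ):ℝ) + 1 ≤ ((m1:ℕ):ℝ) := by exact_mod_cast h
      gcongr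
  -- strata cover [0,1)
  have hIunion : (⋃ m : Fin S, I m) = Set.Ico (0:ℝ) 1 := by
    ext t
    simp only [Set.mem_iUnion, hIdef, Set.mem_Ico]
    constructor
    · rintro ⟨m, hm1, hm2⟩
      constructor
      · exact le_trans (by positivity) hm1
      · refine lt_of_lt_of_le hm2 ?_
        rw [div_le_one hSpos]
        have : (m:ℕ) + 1 ≤ S := m.isLt
        exact_mod_cast this
    · rintro ⟨h0, h1⟩
      have htS : 0 ≤ t * S := by positivity
      have hkS : ⌊t * S⌋₊ < S := by
        have : t * S < S := by nlinarith
        exact Nat.floor_lt htS |>.2 (by exact_mod_cast this)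
      refine ⟨⟨⌊t * S⌋₊, hkS⟩, ?_, ?_⟩
      · rw [div_le_iff₀ hSpos]
        exact_mod_cast Nat.floor_le htS
      · rw [lt_div_iff₀ hSpos]
        exact_mod_cast Nat.lt_floor_add_one (t * S)
  -- aggregated law
  have hrsum : ∀ j, ∑ m, r m j = S * p j := by
    intro j
    simp only [hrm]
    rw [← Finset.mul_sum]
    congr 1
    rw [← ENNReal.toReal_sum (fun m _ => ne_of_lt (lt_of_le_of_lt
      (measure_mono Set.inter_subset_left) (by rw [hIvol m]; exact ENNReal.ofReal_lt_top)))]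
    rw [← measure_biUnion_finset
      (fun m1 _ m2 _ hne => Set.disjoint_left.2 fun t ht1 ht2 =>
        Set.disjoint_left.1 (hIdisj m1 m2 hne) ht1.1 ht2.1)
      (fun m _ => ((measurableSet_Ico).inter (hAmeas j)))]
    have huniv : (⋃ m ∈ Finset.univ, (I m ∩ A j)) = Set.Ico (0:ℝ) 1 ∩ A j := by
      rw [show (⋃ m ∈ Finset.univ, (I m ∩ A j)) = ⋃ m, (I m ∩ A j) by simp,
        ← Set.iUnion_inter, hIunion]
    rw [huniv, hIcoA j, Real.volume_Ico, hF10 j]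
    rw [ENNReal.toReal_ofReal (by linarith [hp j])]
    ring
  -- coordinates of centered vectors
  set u : Fin d → Fin n → ℝ := fun a j => V j a - mu a with hudef
  have hmua : ∀ a, mu a = ∑ j, p j * V j a := by
    intro a
    conv_lhs => rw [hmu]
    rw [show ((∑ j, p j • V j : EuclideanSpace ℝ (Fin d)) a) = ∑ j, (p j • V j) a from
      by rw [WithLp.ofLp_sum]; exact Finset.sum_apply a Finset.univ _]
    rfl
  have hu0 : ∀ a, ∑ j, p j * u a j = 0 := by
    intro a
    simp only [hudef, mul_sub, Finset.sum_sub_distrib, ← Finset.sum_mul, hp1, one_mul,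
      ← hmua a, sub_self]
  set g : (Fin S → Fin n) → ℝ := fun c => ‖((S : ℝ)⁻¹ • ∑ m, V (c m)) - mu‖ ^ 2 with hgdef
  have hnormsq : ∀ x : EuclideanSpace ℝ (Fin d), ‖x‖^2 = ∑ a, x a ^ 2 := by
    intro x
    rw [EuclideanSpace.norm_eq, Real.sq_sqrt (Finset.sum_nonneg fun a _ => sq_nonneg _)]
    simp [Real.norm_eq_abs, sq_abs]
  have hg : ∀ c : Fin S → Fin n, g c = (S:ℝ)⁻¹^2 * ∑ a, (∑ m, u a (c m))^2 := by
    intro c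
    rw [show g c = ‖((S : ℝ)⁻¹ • ∑ m, V (c m)) - mu‖ ^ 2 from rfl, hnormsq]
    rw [Finset.mul_sum]
    refine Finset.sum_congr rfl fun a _ => ?_
    have happ : (((S : ℝ)⁻¹ • ∑ m, V (c m) : EuclideanSpace ℝ (Fin d)) - mu) a
        = (S:ℝ)⁻¹ * (∑ m, V (c m) a) - mu a := by
      have h1 : ((∑ m, V (c m) : EuclideanSpace ℝ (Fin d)) a) = ∑ m, V (c m) a :=
        by rw [WithLp.ofLp_sum]; exact Finset.sum_apply a Finset.univ _
      rw [PiLp.sub_apply, PiLp.smul_apply, h1, smul_eq_mul]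
    rw [happ]
    have hsum : ∑ m, u a (c m) = (∑ m, V (c m) a) - S * mu a := by
      simp only [hudef, Finset.sum_sub_distrib, Finset.sum_const, Finset.card_univ,
        Fintype.card_fin, nsmul_eq_mul]
    rw [hsum]
    field_simp
  -- expectation formula as weighted sum
  have hEstrat : (∫ ω, ‖((S : ℝ)⁻¹ • ∑ m, V (Finv (T m ω))) - mu‖ ^ 2 ∂P)
      = ∑ c : Fin S → Fin n, (∏ m, r m (c m)) * g c :=
    expect_fin P J hJmeas hJind g
  have hEiid : (∫ ω, ‖((S : ℝ)⁻¹ • ∑ s, V (i s ω)) - mu‖ ^ 2 ∂P)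
      = ∑ c : Fin S → Fin n, (∏ s, p (c s)) * g c := by
    rw [expect_fin P i himeas hiindep g]
    simp only [hilaw]
  -- generic evaluation
  have hQ : ∀ q : Fin S → Fin n → ℝ, (∀ m, ∑ j, q m j = 1) →
      ∑ c : Fin S → Fin n, (∏ m, q m (c m)) * g c
        = (S:ℝ)⁻¹^2 * ∑ a, ((∑ m, ∑ j, q m j * u a j)^2
            + (∑ m, ∑ j, q m j * u a j ^ 2) - ∑ m, (∑ j, q m j * u a j)^2) := by
    intro q hq
    simp only [hg]
    have step : ∑ c : Fin S → Fin n, (∏ m, q m (c m)) * ((S:ℝ)⁻¹^2 * ∑ a, (∑ m, u a (c m))^2)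
        = (S:ℝ)⁻¹^2 * ∑ a, ∑ c : Fin S → Fin n, (∏ m, q m (c m)) * (∑ m, u a (c m))^2 := by
      simp only [Finset.mul_sum]
      rw [Finset.sum_comm]
      exact Finset.sum_congr rfl fun a _ => Finset.sum_congr rfl fun c _ => by ring
    rw [step]
    congr 1
    refine Finset.sum_congr rfl fun a _ => ?_
    exact core_sum q hq (u a)
  -- per-coordinate variance
  set D : Fin d → ℝ := fun a => ∑ j, p j * u a j ^ 2 with hDdef
  -- iid value
  have hiid_val : (∫ ω, ‖((S : ℝ)⁻¹ • ∑ s, V (i s ω)) - mu‖ ^ 2 ∂P)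
      = (S:ℝ)⁻¹ * ∑ a, D a := by
    rw [hEiid, hQ (fun _ => p) (fun _ => hp1)]
    have h1 : ∀ a : Fin d, (∑ m : Fin S, ∑ j, p j * u a j) = 0 := by
      intro a; simp [hu0 a]
    have h2 : ∀ a : Fin d, (∑ m : Fin S, ∑ j, p j * u a j ^ 2) = S * D a := by
      intro a; simp [hDdef, Finset.sum_const, Finset.card_univ, nsmul_eq_mul]
    have h3 : ∀ a : Fin d, (∑ m : Fin S, (∑ j, p j * u a j)^2) = 0 := by
      intro a; simp [hu0 a]
    simp only [h1, h2, h3]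
    rw [Finset.mul_sum, Finset.mul_sum]
    refine Finset.sum_congr rfl fun a _ => ?_
    field_simp
    ring
  -- stratified value
  set B : Fin d → ℝ := fun a => ∑ m, (∑ j, r m j * u a j)^2 with hBdef
  have hstrat_val : (∫ ω, ‖((S : ℝ)⁻¹ • ∑ m, V (Finv (T m ω))) - mu‖ ^ 2 ∂P)
      = (S:ℝ)⁻¹^2 * ∑ a, ((S:ℝ) * D a - B a) := by
    rw [hEstrat, hQ r hr1]
    congr 1
    refine Finset.sum_congr rfl fun a _ => ?_
    have h1 : (∑ m, ∑ j, r m j * u a j) = 0 := by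
      rw [Finset.sum_comm]
      simp only [← Finset.sum_mul, hrsum]
      rw [show ∑ j, (S:ℝ) * p j * u a j = (S:ℝ) * ∑ j, p j * u a j by
        rw [Finset.mul_sum]; exact Finset.sum_congr rfl fun j _ => by ring]
      rw [hu0 a, mul_zero]
    have h2 : (∑ m, ∑ j, r m j * u a j ^ 2) = (S:ℝ) * D a := by
      rw [Finset.sum_comm]
      simp only [← Finset.sum_mul, hrsum]
      rw [hDdef, Finset.mul_sum]
      exact Finset.sum_congr rfl fun j _ => by ring
    rw [h1, h2, hBdef]
    ring
  have htrace : Matrix.trace Sigma = ∑ a, D a := by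
    rw [Matrix.trace]
    refine Finset.sum_congr rfl fun a _ => ?_
    rw [Matrix.diag_apply, hSigma a a, hDdef]
    exact Finset.sum_congr rfl fun j _ => by rw [hudef]; ring
  constructor
  · rw [hstrat_val, hiid_val]
    have hB0 : ∀ a, 0 ≤ B a := fun a => Finset.sum_nonneg fun m _ => sq_nonneg _
    have : (S:ℝ)⁻¹^2 * ∑ a, ((S:ℝ) * D a - B a) ≤ (S:ℝ)⁻¹^2 * ∑ a, (S:ℝ) * D a := by
      gcongr with a
      exact sub_le_self _ (hB0 a)
    refine le_trans this (le_of_eq ?_)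
    rw [show ∑ a, ((S:ℝ) * D a) = (S:ℝ) * ∑ a, D a from (Finset.mul_sum _ _ _).symm]
    field_simp
  · rw [hiid_val, htrace]
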